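/- Let n ≥ 3, let Ω ⊆ ℝ^n be a measurable set, let f ∈ L^n(Ω), and let (f_m) be a sequence in L^n(Ω) converging to f in the L^n norm. Then for every ε > 0 there exists a strictly increasing sequence of indices (k_m) such that r_{f_{k_m}}(ε) ≤ 2·r_f(ε/3) for all m ∈ ℕ. -/

import Mathlib

open MeasureTheory ENNReal Filter

/-- `R_f(t) = ‖ f·1_{|f|>t} ‖_{Lⁿ(Ω)}`. -/
noncomputable def Rquant (n : ℕ) (Ω : Set (EuclideanSpace ℝ (Fin n)))
    (f : EuclideanSpace ℝ (Fin n) → ℝ) (t : ℝ) : ℝ≥0∞ :=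
  eLpNorm (fun x => if t < |f x| then f x else 0) n (volume.restrict Ω)

/-- `r_f(ε) = inf { t > 0 : R_f(t) < ε }`. -/
noncomputable def rquant (n : ℕ) (Ω : Set (EuclideanSpace ℝ (Fin n)))
    (f : EuclideanSpace ℝ (Fin n) → ℝ) (ε : ℝ) : ℝ :=
  sInf {t : ℝ | 0 < t ∧ Rquant n Ω f t < ENNReal.ofReal ε}


section Aux

variable {X : Type*} [MeasurableSpace X] {μ : Measure X}

/-- measurability helper -/
lemma aux_aesm (f g : X → ℝ) (hf : AEStronglyMeasurable f μ)
    (hg : AEStronglyMeasurable g μ) (s t : ℝ) :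
    AEStronglyMeasurable (fun x => if s < |g x| then (if t < |f x| then f x else 0) else 0) μ := by
  obtain ⟨f', hf'm, hff'⟩ := hf
  obtain ⟨g', hg'm, hgg'⟩ := hg
  refine ⟨fun x => if s < |g' x| then (if t < |f' x| then f' x else 0) else 0, ?_, ?_⟩
  · refine Measurable.stronglyMeasurable ?_
    refine Measurable.ite ?_ ?_ measurable_const
    · exact measurableSet_lt measurable_const hg'm.measurable.abs
    · exact Measurable.ite (measurableSet_lt measurable_const
        hf'm.measurable.abs) hf'm.measurable
        measurable_const
  · filter_upwards [hff', hgg'] with x h1 h2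
    simp only [h1, h2]

lemma aux_aesm2 (f g : X → ℝ) (hf : AEStronglyMeasurable f μ)
    (hg : AEStronglyMeasurable g μ) (s t : ℝ) :
    AEStronglyMeasurable
      (fun x => if s < |g x| then (if t < |f x| then g x - f x else g x) else 0) μ := by
  obtain ⟨f', hf'm, hff'⟩ := hf
  obtain ⟨g', hg'm, hgg'⟩ := hg
  refine ⟨fun x => if s < |g' x| then (if t < |f' x| then g' x - f' x else g' x) else 0, ?_, ?_⟩
  · refine Measurable.stronglyMeasurable ?_
    refine Measurable.ite ?_ ?_ measurable_const
    · exact measurableSet_lt measurable_const hg'm.measurable.abs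
    · exact Measurable.ite (measurableSet_lt measurable_const
        hf'm.measurable.abs)
        (hg'm.measurable.sub hf'm.measurable)
        hg'm.measurable
  · filter_upwards [hff', hgg'] with x h1 h2
    simp only [h1, h2]

/-- Core inequality: `R_g(2t) ≤ R_f(t) + 2‖g−f‖`. -/
lemma aux_core (p : ℝ≥0∞) (hp : 1 ≤ p) (f g : X → ℝ) (hf : AEStronglyMeasurable f μ)
    (hg : AEStronglyMeasurable g μ) (t : ℝ) (ht : 0 < t) :
    eLpNorm (fun x => if 2 * t < |g x| then g x else 0) p μ ≤
      eLpNorm (fun x => if t < |f x| then f x else 0) p μ +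
      2 * eLpNorm (fun x => g x - f x) p μ := by
  set v : X → ℝ := fun x => if 2 * t < |g x| then (if t < |f x| then f x else 0) else 0 with hv
  set w : X → ℝ := fun x => if 2 * t < |g x| then (if t < |f x| then g x - f x else g x) else 0
    with hw
  have hdecomp : (fun x => if 2 * t < |g x| then g x else 0) = fun x => v x + w x := by
    funext x
    simp only [hv, hw]
    split_ifs <;> ring
  rw [hdecomp]
  have h1 : eLpNorm (fun x => v x + w x) p μ ≤ eLpNorm v p μ + eLpNorm w p μ :=
    eLpNorm_add_le (aux_aesm f g hf hg (2*t) t) (aux_aesm2 f g hf hg (2*t) t) hp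
  have h2 : eLpNorm v p μ ≤ eLpNorm (fun x => if t < |f x| then f x else 0) p μ := by
    refine eLpNorm_mono fun x => ?_
    simp only [hv, Real.norm_eq_abs]
    split_ifs <;> simp [abs_nonneg]
  have h3 : eLpNorm w p μ ≤ 2 * eLpNorm (fun x => g x - f x) p μ := by
    have : eLpNorm w p μ ≤ eLpNorm (fun x => (2:ℝ) * (g x - f x)) p μ := by
      refine eLpNorm_mono fun x => ?_
      simp only [hw, Real.norm_eq_abs, abs_mul]
      rw [show |(2:ℝ)| = 2 by norm_num]
      split_ifs with h1' h2'
      · linarith [abs_nonneg (g x - f x)]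
      · have hfx : |f x| ≤ t := not_lt.mp h2'
        linarith [abs_sub_abs_le_abs_sub (g x) (f x)]
      · simp only [abs_zero]; positivity
    refine this.trans ?_
    have : (fun x => (2:ℝ) * (g x - f x)) = (2:ℝ) • (fun x => g x - f x) := by
      funext x; simp
    rw [this, eLpNorm_const_smul]
    simp [Real.enorm_eq_ofReal_abs]
  calc eLpNorm (fun x => v x + w x) p μ ≤ eLpNorm v p μ + eLpNorm w p μ := h1
    _ ≤ _ := add_le_add h2 h3

end Aux

/-- Let `n ≥ 3`, `Ω ⊆ ℝⁿ` measurable, `f ∈ Lⁿ(Ω)` and `(f_m)` a sequence in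
`Lⁿ(Ω)` converging to `f` in `Lⁿ`. Then for every `ε > 0` there is a strictly increasing
sequence of indices `(k_m)` such that `r_{f_{k_m}}(ε) ≤ 2 · r_f(ε/3)` for all `m`. -/
theorem rquant_subsequence (n : ℕ) (hn : 3 ≤ n)
    (Ω : Set (EuclideanSpace ℝ (Fin n))) (hΩ : MeasurableSet Ω)
    (f : EuclideanSpace ℝ (Fin n) → ℝ)
    (hf : MemLp f n (volume.restrict Ω))
    (fm : ℕ → EuclideanSpace ℝ (Fin n) → ℝ)
    (hfm : ∀ m, MemLp (fm m) n (volume.restrict Ω))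
    (hconv : Tendsto (fun m => eLpNorm (fun x => fm m x - f x) n (volume.restrict Ω))
      atTop (nhds 0))
    (ε : ℝ) (hε : 0 < ε) :
    ∃ k : ℕ → ℕ, StrictMono k ∧
      ∀ m : ℕ, rquant n Ω (fm (k m)) ε ≤ 2 * rquant n Ω f (ε / 3) := by
  set μ := volume.restrict Ω with hμ
  have hp1 : (1 : ℝ≥0∞) ≤ (n : ℝ≥0∞) := by
    exact_mod_cast Nat.one_le_cast.mpr (by omega)
  -- the set S_f is nonempty
  set Sf := {t : ℝ | 0 < t ∧ Rquant n Ω f t < ENNReal.ofReal (ε / 3)} with hSf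
  have hSfne : Sf.Nonempty := by
    set f' := hf.1.mk f with hf'
    have hff' : f =ᵐ[μ] f' := hf.1.ae_eq_mk
    have hf'mem : MemLp f' n μ := hf.ae_eq hff'
    obtain ⟨M, hM0, hM⟩ := hf'mem.eLpNorm_indicator_norm_ge_pos_le hf.1.stronglyMeasurable_mk
      (ε := ε / 6) (by linarith)
    refine ⟨M, hM0, ?_⟩
    have e1 : Rquant n Ω f M = eLpNorm (fun x => if M < |f' x| then f' x else 0) n μ := by
      refine eLpNorm_congr_ae ?_
      filter_upwards [hff'] with x hx
      simp only [hx]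
    have e2 : eLpNorm (fun x => if M < |f' x| then f' x else 0) n μ ≤
        eLpNorm ({ x | M ≤ ‖f' x‖₊ }.indicator f') n μ := by
      refine eLpNorm_mono fun x => ?_
      by_cases h : M < |f' x|
      · rw [if_pos h, Set.indicator_of_mem]
        simp only [Set.mem_setOf_eq, coe_nnnorm, Real.norm_eq_abs]
        exact h.le
      · rw [if_neg h]
        simp [norm_nonneg]
    rw [e1]
    refine lt_of_le_of_lt (e2.trans hM) ?_
    exact ENNReal.ofReal_lt_ofReal_iff (by linarith) |>.mpr (by linarith)
  -- eventual bound on the differences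
  have hEv : ∀ᶠ m in atTop, eLpNorm (fun x => fm m x - f x) n μ < ENNReal.ofReal (ε / 3) :=
    hconv.eventually_lt_const (by simp [ENNReal.ofReal_pos]; linarith)
  obtain ⟨N, hN⟩ := eventually_atTop.mp hEv
  refine ⟨fun m => N + m, fun a b h => Nat.add_lt_add_left h N, fun m => ?_⟩
  set g := fm (N + m) with hg
  have hD : eLpNorm (fun x => g x - f x) n μ < ENNReal.ofReal (ε / 3) := hN _ (Nat.le_add_right _ _)
  -- key inclusion
  have hincl : ∀ t ∈ Sf, 2 * t ∈ {t : ℝ | 0 < t ∧ Rquant n Ω g t < ENNReal.ofReal ε} := by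
    intro t ⟨ht0, htR⟩
    refine ⟨by linarith, ?_⟩
    have hcore := aux_core (μ := μ) (n : ℝ≥0∞) hp1 f g hf.1 (hfm (N + m)).1 t ht0
    have hlt : eLpNorm (fun x => if t < |f x| then f x else 0) n μ +
        2 * eLpNorm (fun x => g x - f x) n μ <
        ENNReal.ofReal (ε / 3) + 2 * ENNReal.ofReal (ε / 3) := by
      refine ENNReal.add_lt_add htR ?_
      exact (ENNReal.mul_lt_mul_iff_right (by norm_num) (by norm_num)).mpr hD
    have heq : ENNReal.ofReal (ε / 3) + 2 * ENNReal.ofReal (ε / 3) = ENNReal.ofReal ε := by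
      rw [show (2:ℝ≥0∞) = ENNReal.ofReal 2 by simp,
        ← ENNReal.ofReal_mul (by norm_num), ← ENNReal.ofReal_add (by linarith) (by linarith)]
      congr 1
      ring
    calc Rquant n Ω g (2 * t) ≤ _ := hcore
      _ < _ := hlt
      _ = _ := heq
  -- conclude via infima
  have hbdd : BddBelow {t : ℝ | 0 < t ∧ Rquant n Ω g t < ENNReal.ofReal ε} :=
    ⟨0, fun y hy => hy.1.le⟩
  refine le_of_forall_pos_le_add fun δ hδ => ?_
  obtain ⟨t, htS, htlt⟩ := Real.lt_sInf_add_pos hSfne (half_pos hδ)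
  have h1 : rquant n Ω g ε ≤ 2 * t := csInf_le hbdd (hincl t htS)
  have h2 : rquant n Ω f (ε / 3) = sInf Sf := rfl
  rw [h2]
  nlinarith
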